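/- arXiv:1809.04396 — 6 statements merged into one kernel-verified Lean document; each statement's English description precedes it below -/
import Mathlib

section
/- Let G = (V, E, w) be a weighted hypergraph with positive degrees. The normalized Laplacian 𝓛_G is a monotone operator with respect to the inner product ⟨·,·⟩_{D⁻¹}: for all x₁, x₂ ∈ ℝ^V and all y₁ ∈ 𝓛_G(x₁), y₂ ∈ 𝓛_G(x₂), one has ⟨y₁ − y₂, x₁ − x₂⟩_{D⁻¹} ≥ 0. -/
open Finset
open scoped Classical

structure WHG (V : Type) [Fintype V] [DecidableEq V] where
  E : Type
  [fintypeE : Fintype E]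
  mem : E → Finset V
  mem_nonempty : ∀ e, (mem e).Nonempty
  w : E → ℝ
  w_pos : ∀ e, 0 < w e

namespace WHG

attribute [instance] WHG.fintypeE

variable {V : Type} [Fintype V] [DecidableEq V] (G : WHG V)

/-- Degree of a vertex. -/
noncomputable def deg (v : V) : ℝ := ∑ e : G.E, if v ∈ G.mem e then G.w e else 0

/-- Volume of a vertex set. -/
noncomputable def vol (S : Finset V) : ℝ := ∑ v ∈ S, G.deg v

/-- Euclidean dot product. -/
def dot (x y : V → ℝ) : ℝ := ∑ v, x v * y v

/-- Inner product weighted by `D⁻¹`. -/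
noncomputable def innerD (x y : V → ℝ) : ℝ := ∑ v, x v * y v / G.deg v

/-- Norm associated to `innerD`. -/
noncomputable def normD (x : V → ℝ) : ℝ := Real.sqrt (G.innerD x x)

/-- `D⁻¹ x`. -/
noncomputable def Dinv (x : V → ℝ) : V → ℝ := fun v => x v / G.deg v

/-- Base polytope `B_e`. -/
def base (e : G.E) : Set (V → ℝ) :=
  convexHull ℝ {b : V → ℝ | ∃ u ∈ G.mem e, ∃ v ∈ G.mem e, b = Pi.single u 1 - Pi.single v 1}

/-- Multi-valued hypergraph Laplacian `L_G`. -/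
def Lap (x : V → ℝ) : Set (V → ℝ) :=
  {y | ∃ b : G.E → V → ℝ,
    (∀ e, b e ∈ G.base e ∧ ∀ b' ∈ G.base e, dot b' x ≤ dot (b e) x) ∧
    y = ∑ e : G.E, (G.w e * dot (b e) x) • b e}

/-- Normalized Laplacian `𝓛_G`. -/
noncomputable def nLap (x : V → ℝ) : Set (V → ℝ) := G.Lap (G.Dinv x)

/-- Total weight of hyperedges crossing `S`. -/
noncomputable def cut (S : Finset V) : ℝ :=
  ∑ e : G.E, if (G.mem e ∩ S).Nonempty ∧ (G.mem e \ S).Nonempty then G.w e else 0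

/-- Conductance of a vertex set. -/
noncomputable def cond (S : Finset V) : ℝ := G.cut S / min (G.vol S) (G.vol Sᶜ)

/-- Conductance of the hypergraph. -/
noncomputable def condG : ℝ :=
  sInf {c | ∃ S : Finset V, S.Nonempty ∧ S ≠ Finset.univ ∧ c = G.cond S}

/-- Connectivity of a hypergraph. -/
def Connected : Prop :=
  ∀ S : Finset V, S.Nonempty → S ≠ Finset.univ →
    ∃ e : G.E, (G.mem e ∩ S).Nonempty ∧ (G.mem e \ S).Nonempty

/-- The stationary vector `π`. -/
noncomputable def piVec : V → ℝ := fun v => G.deg v / G.vol Finset.univ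

/-- Solution of the heat equation `(HE; s)`. -/
def IsHeatSol (s : V → ℝ) (ρ : ℝ → V → ℝ) : Prop :=
  (∃ K : NNReal, LipschitzOnWith K ρ (Set.Ici 0)) ∧ ρ 0 = s ∧
  (∀ᵐ t : ℝ ∂MeasureTheory.volume, 0 ≤ t → ∃ y ∈ G.nLap (ρ t), HasDerivAt ρ (-y) t)

/-- Sweep sets of a vector. -/
def sweep (x : V → ℝ) : Set (Finset V) :=
  {S | ∃ τ : ℝ, S = Finset.univ.filter (fun v => τ ≤ x v) ∨
                S = Finset.univ.filter (fun v => x v ≤ τ)}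

/-- `κ_{T,t}`: the least conductance of nontrivial sweep sets of `ρ_ξ`, `ξ ∈ [T,t]`. -/
noncomputable def kappa (ρ : ℝ → V → ℝ) (T t : ℝ) : ℝ :=
  sInf {c | ∃ ξ ∈ Set.Icc T t, ∃ S ∈ sweep (ρ ξ),
    S.Nonempty ∧ S ≠ Finset.univ ∧ c = G.cond S}

/-- The family `𝒢(G, x)` of collapsed weighted graphs. -/
def GraphFamily (x : V → ℝ) (A : Matrix V V ℝ) : Prop :=
  A.IsSymm ∧ (∀ u v, 0 ≤ A u v) ∧ (∀ v, ∑ u, A v u = G.deg v) ∧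
  ∃ w' : G.E → V → V → ℝ,
    (∀ e u v, 0 ≤ w' e u v) ∧
    (∀ e u v, w' e u v ≠ 0 →
      (u ∈ G.mem e ∧ ∀ u' ∈ G.mem e, x u' ≤ x u) ∧
      (v ∈ G.mem e ∧ ∀ v' ∈ G.mem e, x v ≤ x v')) ∧
    (∀ e, ∑ u : V, ∑ v : V, w' e u v = G.w e) ∧
    (∀ u v, u ≠ v → A u v = ∑ e : G.E, (w' e u v + w' e v u))


lemma zero_mem_base (e : G.E) : (0 : V → ℝ) ∈ G.base e := by
  obtain ⟨u, hu⟩ := G.mem_nonempty e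
  exact subset_convexHull ℝ _ ⟨u, hu, u, hu, by simp⟩

lemma dot_sub_left (x y z : V → ℝ) : dot (x - y) z = dot x z - dot y z := by
  simp [dot, sub_mul, Finset.sum_sub_distrib]

lemma dot_sub_right (x y z : V → ℝ) : dot x (y - z) = dot x y - dot x z := by
  simp [dot, mul_sub, Finset.sum_sub_distrib]

lemma dot_sum_left {ι : Type*} (s : Finset ι) (f : ι → V → ℝ) (z : V → ℝ) :
    dot (∑ i ∈ s, f i) z = ∑ i ∈ s, dot (f i) z := by
  simp [dot, Finset.sum_mul]
  rw [Finset.sum_comm]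

lemma dot_smul_left (c : ℝ) (x z : V → ℝ) : dot (c • x) z = c * dot x z := by
  simp [dot, Finset.mul_sum, mul_assoc]

lemma innerD_eq_dot (x y : V → ℝ) : G.innerD x y = dot x (G.Dinv y) := by
  simp [innerD, dot, Dinv, mul_div_assoc]

/-- the normalized Laplacian of a weighted hypergraph is a monotone
operator with respect to `⟨·,·⟩_{D⁻¹}`. -/
theorem nLap_monotone {V : Type} [Fintype V] [DecidableEq V] (G : WHG V)
    (hd : ∀ v, 0 < G.deg v) (x₁ x₂ y₁ y₂ : V → ℝ)
    (h₁ : y₁ ∈ G.nLap x₁) (h₂ : y₂ ∈ G.nLap x₂) :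
    0 ≤ G.innerD (y₁ - y₂) (x₁ - x₂) := by
  obtain ⟨b₁, hb₁, hy₁⟩ := h₁
  obtain ⟨b₂, hb₂, hy₂⟩ := h₂
  set z₁ := G.Dinv x₁ with hz₁
  set z₂ := G.Dinv x₂ with hz₂
  have hDsub : G.Dinv (x₁ - x₂) = z₁ - z₂ := by
    funext v; simp [Dinv, hz₁, hz₂, sub_div]
  have key : G.innerD (y₁ - y₂) (x₁ - x₂)
      = ∑ e : G.E, G.w e *
          (dot (b₁ e) z₁ * (dot (b₁ e) z₁ - dot (b₁ e) z₂)
            - dot (b₂ e) z₂ * (dot (b₂ e) z₁ - dot (b₂ e) z₂)) := by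
    rw [G.innerD_eq_dot, hDsub, dot_sub_left, hy₁, hy₂,
      dot_sum_left, dot_sum_left, ← Finset.sum_sub_distrib]
    refine Finset.sum_congr rfl fun e _ => ?_
    rw [dot_smul_left, dot_smul_left, dot_sub_right, dot_sub_right]
    ring
  rw [key]
  refine Finset.sum_nonneg fun e _ => ?_
  have ha : 0 ≤ dot (b₁ e) z₁ := by
    simpa [dot] using (hb₁ e).2 0 (G.zero_mem_base e)
  have hc : 0 ≤ dot (b₂ e) z₂ := by
    simpa [dot] using (hb₂ e).2 0 (G.zero_mem_base e)
  have hq : dot (b₂ e) z₁ ≤ dot (b₁ e) z₁ := (hb₁ e).2 _ (hb₂ e).1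
  have hp : dot (b₁ e) z₂ ≤ dot (b₂ e) z₂ := (hb₂ e).2 _ (hb₁ e).1
  refine mul_nonneg (G.w_pos e).le ?_
  nlinarith [sq_nonneg (dot (b₁ e) z₁ - dot (b₂ e) z₂),
    mul_nonneg ha (sub_nonneg.2 hp), mul_nonneg hc (sub_nonneg.2 hq)]

end WHG
end

section
/- Let G = (V, E, w) be a weighted hypergraph with positive degrees. For every x ∈ ℝ^V and every y ∈ 𝓛_G(x), one has ⟨x, y⟩_{D⁻¹} = ∑_{e ∈ E} w(e) (max_{u ∈ e} (D⁻¹x)(u) − min_{u ∈ e} (D⁻¹x)(u))² ≥ 0. Consequently, every eigenvalue of 𝓛_G is nonnegative: if λ ∈ ℝ and x ∈ ℝ^V with x ≠ 0 satisfy λx ∈ 𝓛_G(x), then λ ≥ 0. -/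
open Finset
open scoped Classical

namespace WHG

variable {V : Type} [Fintype V] [DecidableEq V] (G : WHG V)

lemma dot_single_sub {V : Type} [Fintype V] [DecidableEq V] (u v : V) (z : V → ℝ) :
    dot (Pi.single u 1 - Pi.single v 1) z = z u - z v := by
  simp [dot, sub_mul, Finset.sum_sub_distrib, Pi.single_apply, ite_mul]

lemma dot_linear {V : Type} [Fintype V] [DecidableEq V] (z : V → ℝ) :
    IsLinearMap ℝ (fun b : V → ℝ => dot b z) := by
  constructor
  · intro a b; simp [dot, add_mul, Finset.sum_add_distrib]
  · intro c b; simp [dot, Finset.mul_sum, mul_assoc]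

/-- On the base polytope, `dot b z ≤ sup' z - inf' z`. -/
lemma dot_base_le {V : Type} [Fintype V] [DecidableEq V] (G : WHG V) (e : G.E)
    (z : V → ℝ) {b : V → ℝ} (hb : b ∈ G.base e) :
    dot b z ≤ (G.mem e).sup' (G.mem_nonempty e) z - (G.mem e).inf' (G.mem_nonempty e) z := by
  have : G.base e ⊆ {b : V → ℝ | dot b z ≤
      (G.mem e).sup' (G.mem_nonempty e) z - (G.mem e).inf' (G.mem_nonempty e) z} := by
    apply convexHull_min
    · rintro b ⟨u, hu, v, hv, rfl⟩
      simp only [Set.mem_setOf_eq, dot_single_sub]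
      exact sub_le_sub (Finset.le_sup' z hu) (Finset.inf'_le z hv)
    · exact convex_halfSpace_le (dot_linear z) _
  exact this hb

/-- The maximizer achieves exactly `sup' - inf'`. -/
lemma dot_max_eq {V : Type} [Fintype V] [DecidableEq V] (G : WHG V) (e : G.E)
    (z : V → ℝ) {b : V → ℝ} (hb : b ∈ G.base e)
    (hmax : ∀ b' ∈ G.base e, dot b' z ≤ dot b z) :
    dot b z = (G.mem e).sup' (G.mem_nonempty e) z - (G.mem e).inf' (G.mem_nonempty e) z := by
  obtain ⟨u, hu, hus⟩ := (G.mem e).exists_mem_eq_sup' (G.mem_nonempty e) z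
  obtain ⟨v, hv, hvs⟩ := (G.mem e).exists_mem_eq_inf' (G.mem_nonempty e) z
  have hmem : (Pi.single u 1 - Pi.single v 1 : V → ℝ) ∈ G.base e :=
    subset_convexHull ℝ _ ⟨u, hu, v, hv, rfl⟩
  have h1 := hmax _ hmem
  rw [dot_single_sub] at h1
  have h2 := G.dot_base_le e z hb
  rw [hus, hvs] at h2
  rw [hus, hvs]
  exact le_antisymm h2 h1

/-- `⟨x, y⟩_{D⁻¹}` for `y ∈ 𝓛_G(x)` equals the sum of the weighted
squared spreads of `D⁻¹x` over hyperedges, is nonnegative, and consequently every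
eigenvalue of `𝓛_G` is nonnegative. -/
theorem innerD_nLap_eq_and_eigenvalues_nonneg {V : Type} [Fintype V] [DecidableEq V]
    (G : WHG V) (hd : ∀ v, 0 < G.deg v) :
    (∀ x y : V → ℝ, y ∈ G.nLap x →
      G.innerD x y = ∑ e : G.E, G.w e *
        ((G.mem e).sup' (G.mem_nonempty e) (G.Dinv x)
          - (G.mem e).inf' (G.mem_nonempty e) (G.Dinv x)) ^ 2 ∧
      0 ≤ G.innerD x y) ∧
    (∀ (lam : ℝ) (x : V → ℝ), x ≠ 0 → lam • x ∈ G.nLap x → 0 ≤ lam) := by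
  have key : ∀ x y : V → ℝ, y ∈ G.nLap x →
      G.innerD x y = ∑ e : G.E, G.w e *
        ((G.mem e).sup' (G.mem_nonempty e) (G.Dinv x)
          - (G.mem e).inf' (G.mem_nonempty e) (G.Dinv x)) ^ 2 := by
    intro x y hy
    obtain ⟨b, hb, rfl⟩ := hy
    set z := G.Dinv x with hz
    have hinner : G.innerD x (∑ e : G.E, (G.w e * dot (b e) z) • b e)
        = ∑ e : G.E, G.w e * dot (b e) z * dot (b e) z := by
      simp only [innerD, Finset.sum_apply, Pi.smul_apply, smul_eq_mul]
      simp only [Finset.mul_sum, Finset.sum_div]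
      rw [Finset.sum_comm]
      refine Finset.sum_congr rfl fun e _ => ?_
      simp only [dot, Finset.mul_sum]
      refine Finset.sum_congr rfl fun v _ => ?_
      simp only [hz, Dinv]
      field_simp
    rw [hinner]
    refine Finset.sum_congr rfl fun e _ => ?_
    rw [G.dot_max_eq e z (hb e).1 (hb e).2]
    ring
  constructor
  · intro x y hy
    refine ⟨key x y hy, ?_⟩
    rw [key x y hy]
    exact Finset.sum_nonneg fun e _ => mul_nonneg (G.w_pos e).le (sq_nonneg _)
  · intro lam x hx hmem
    have h1 : 0 ≤ G.innerD x (lam • x) := by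
      rw [key x (lam • x) hmem]
      exact Finset.sum_nonneg fun e _ => mul_nonneg (G.w_pos e).le (sq_nonneg _)
    have h2 : G.innerD x (lam • x) = lam * G.innerD x x := by
      simp only [innerD, Pi.smul_apply, smul_eq_mul, Finset.mul_sum]
      refine Finset.sum_congr rfl fun v _ => ?_; ring
    have h3 : 0 < G.innerD x x := by
      obtain ⟨v, hv⟩ := Function.ne_iff.mp hx
      refine Finset.sum_pos' (fun w _ => ?_) ⟨v, Finset.mem_univ v, ?_⟩
      · exact div_nonneg (mul_self_nonneg _) (hd w).le
      · exact div_pos (mul_self_pos.mpr hv) (hd v)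
    rw [h2, mul_comm] at h1
    exact nonneg_of_mul_nonneg_right h1 h3

end WHG
end

section
/- Let G = (V, E, w) be a weighted hypergraph with positive degrees and let x ∈ ℝ^V. For every a ∈ ℝ such that the sweep set S^a := {v ∈ V : x(v) ≥ a} satisfies ∅ ⊊ S^a ⊊ V, one has φ_G(S^a) = φ_{G̃}(S̃^a), where G̃ is the contracted weighted graph associated with x and S̃^a = {b ∈ W : b ≥ a}. -/
open Finset
open scoped Classical

namespace WHG

variable {V : Type} [Fintype V] [DecidableEq V] (G : WHG V)

private lemma fiber_sum {V : Type} [Fintype V] [DecidableEq V] (x : V → ℝ) (p : ℝ → Prop)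
    [DecidablePred p] (f : V → ℝ) :
    ∑ b ∈ (Finset.image x Finset.univ).filter p,
      ∑ v ∈ Finset.univ.filter (fun v => x v = b), f v
    = ∑ v ∈ Finset.univ.filter (fun v => p (x v)), f v := by
  have h1 : ∀ b : ℝ, (∑ v ∈ Finset.univ.filter (fun v => x v = b), f v)
      = ∑ v : V, if x v = b then f v else 0 := fun b => Finset.sum_filter _ _
  simp only [h1]
  rw [Finset.sum_comm]
  rw [Finset.sum_filter (fun v => p (x v)) f]
  refine Finset.sum_congr rfl fun v _ => ?_
  rw [Finset.sum_ite_eq ((Finset.image x Finset.univ).filter p) (x v) (fun _ => f v)]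
  have hx : x v ∈ Finset.image x Finset.univ :=
    Finset.mem_image_of_mem x (Finset.mem_univ v)
  by_cases hp : p (x v)
  · rw [if_pos (Finset.mem_filter.2 ⟨hx, hp⟩), if_pos hp]
  · rw [if_neg (fun h => hp (Finset.mem_filter.1 h).2), if_neg hp]

private lemma double_ite (s t : Finset ℝ) (B C w : ℝ) :
    (∑ b ∈ s, ∑ c ∈ t, if b = B ∧ c = C then w else 0)
      = if B ∈ s ∧ C ∈ t then w else 0 := by
  classical
  have h : ∀ b : ℝ, (∑ c ∈ t, if b = B ∧ c = C then w else 0)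
      = if b = B then (if C ∈ t then w else 0) else 0 := by
    intro b
    by_cases hb : b = B
    · simp only [hb, true_and, if_pos rfl]
      exact Finset.sum_ite_eq' t C (fun _ => w)
    · simp [hb]
  simp only [h]
  rw [Finset.sum_ite_eq' s B (fun _ => if C ∈ t then w else 0)]
  by_cases hB : B ∈ s <;> by_cases hC : C ∈ t <;> simp [hB, hC]

/-- Lemma 4.6: the conductance of a sweep set of `x` in the hypergraph
`G` equals the conductance of the corresponding sweep set in the contracted weighted
graph `G̃` on the value set `W = x(V)`. -/
theorem sweep_cond_eq_contracted {V : Type} [Fintype V] [DecidableEq V] (G : WHG V)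
    (hd : ∀ v, 0 < G.deg v) (x : V → ℝ) (a : ℝ)
    (hS1 : (Finset.univ.filter (fun v => a ≤ x v)).Nonempty)
    (hS2 : Finset.univ.filter (fun v => a ≤ x v) ≠ Finset.univ) :
    G.cond (Finset.univ.filter (fun v => a ≤ x v)) =
      (∑ b ∈ (Finset.image x Finset.univ).filter (fun b => a ≤ b),
        ∑ c ∈ (Finset.image x Finset.univ).filter (fun c => ¬ a ≤ c),
          ∑ e : G.E,
            if ({(G.mem e).sup' (G.mem_nonempty e) x,
                 (G.mem e).inf' (G.mem_nonempty e) x} : Set ℝ) = {b, c}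
            then G.w e else 0)
      / min
          (∑ b ∈ (Finset.image x Finset.univ).filter (fun b => a ≤ b),
            ∑ v ∈ Finset.univ.filter (fun v => x v = b), G.deg v)
          (∑ c ∈ (Finset.image x Finset.univ).filter (fun c => ¬ a ≤ c),
            ∑ v ∈ Finset.univ.filter (fun v => x v = c), G.deg v) := by
  classical
  set S := Finset.univ.filter (fun v => a ≤ x v) with hSdef
  have hScompl : Sᶜ = Finset.univ.filter (fun v => ¬ a ≤ x v) := by
    rw [hSdef, Finset.compl_filter]
  have hvol1 : G.vol S
      = ∑ b ∈ (Finset.image x Finset.univ).filter (fun b => a ≤ b),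
          ∑ v ∈ Finset.univ.filter (fun v => x v = b), G.deg v := by
    rw [fiber_sum x (fun b => a ≤ b) G.deg]; rfl
  have hvol2 : G.vol Sᶜ
      = ∑ c ∈ (Finset.image x Finset.univ).filter (fun c => ¬ a ≤ c),
          ∑ v ∈ Finset.univ.filter (fun v => x v = c), G.deg v := by
    rw [fiber_sum x (fun c => ¬ a ≤ c) G.deg, hScompl]; rfl
  have hcut : (∑ b ∈ (Finset.image x Finset.univ).filter (fun b => a ≤ b),
        ∑ c ∈ (Finset.image x Finset.univ).filter (fun c => ¬ a ≤ c),
          ∑ e : G.E,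
            if ({(G.mem e).sup' (G.mem_nonempty e) x,
                 (G.mem e).inf' (G.mem_nonempty e) x} : Set ℝ) = {b, c}
            then G.w e else 0) = G.cut S := by
    calc (∑ b ∈ (Finset.image x Finset.univ).filter (fun b => a ≤ b),
        ∑ c ∈ (Finset.image x Finset.univ).filter (fun c => ¬ a ≤ c),
          ∑ e : G.E,
            if ({(G.mem e).sup' (G.mem_nonempty e) x,
                 (G.mem e).inf' (G.mem_nonempty e) x} : Set ℝ) = {b, c}
            then G.w e else 0)
        = ∑ b ∈ (Finset.image x Finset.univ).filter (fun b => a ≤ b),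
          ∑ e : G.E,
          ∑ c ∈ (Finset.image x Finset.univ).filter (fun c => ¬ a ≤ c),
            if ({(G.mem e).sup' (G.mem_nonempty e) x,
                 (G.mem e).inf' (G.mem_nonempty e) x} : Set ℝ) = {b, c}
            then G.w e else 0 := Finset.sum_congr rfl fun b _ => Finset.sum_comm
      _ = ∑ e : G.E,
          ∑ b ∈ (Finset.image x Finset.univ).filter (fun b => a ≤ b),
          ∑ c ∈ (Finset.image x Finset.univ).filter (fun c => ¬ a ≤ c),
            if ({(G.mem e).sup' (G.mem_nonempty e) x,
                 (G.mem e).inf' (G.mem_nonempty e) x} : Set ℝ) = {b, c}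
            then G.w e else 0 := Finset.sum_comm
      _ = ∑ e : G.E, (if (G.mem e ∩ S).Nonempty ∧ (G.mem e \ S).Nonempty
            then G.w e else 0) := by
          refine Finset.sum_congr rfl fun e _ => ?_
          set B := (G.mem e).sup' (G.mem_nonempty e) x with hB
          set C := (G.mem e).inf' (G.mem_nonempty e) x with hC
          have hCB : C ≤ B := by
            obtain ⟨v, hv, hvC⟩ := Finset.exists_mem_eq_inf' (G.mem_nonempty e) x
            rw [hC, hB, hvC]
            exact Finset.le_sup' x hv
          have hBW : B ∈ Finset.image x Finset.univ := by
            obtain ⟨v, hv, hvB⟩ := Finset.exists_mem_eq_sup' (G.mem_nonempty e) x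
            rw [hB, hvB]; exact Finset.mem_image_of_mem x (Finset.mem_univ v)
          have hCW : C ∈ Finset.image x Finset.univ := by
            obtain ⟨v, hv, hvC⟩ := Finset.exists_mem_eq_inf' (G.mem_nonempty e) x
            rw [hC, hvC]; exact Finset.mem_image_of_mem x (Finset.mem_univ v)
          have hcond : ∀ b ∈ (Finset.image x Finset.univ).filter (fun b => a ≤ b),
              ∀ c ∈ (Finset.image x Finset.univ).filter (fun c => ¬ a ≤ c),
              (({B, C} : Set ℝ) = {b, c}) ↔ (b = B ∧ c = C) := by
            intro b hb c hc
            have hab : a ≤ b := (Finset.mem_filter.1 hb).2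
            have hca : ¬ a ≤ c := (Finset.mem_filter.1 hc).2
            constructor
            · intro h
              rcases Set.pair_eq_pair_iff.1 h with ⟨h1, h2⟩ | ⟨h1, h2⟩
              · exact ⟨h1.symm, h2.symm⟩
              · have hbc : b ≤ c := by rw [← h2, ← h1]; exact hCB
                exact absurd (le_trans hab hbc) hca
            · rintro ⟨rfl, rfl⟩; rfl
          rw [Finset.sum_congr rfl fun b hb => Finset.sum_congr rfl fun c hc =>
            if_congr (hcond b hb c hc) rfl rfl]
          rw [double_ite]
          refine if_congr ?_ rfl rfl
          have h1 : (G.mem e ∩ S).Nonempty ↔ a ≤ B := by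
            rw [hB, Finset.le_sup'_iff]
            constructor
            · rintro ⟨v, hv⟩
              rw [Finset.mem_inter, hSdef, Finset.mem_filter] at hv
              exact ⟨v, hv.1, hv.2.2⟩
            · rintro ⟨v, hv, hav⟩
              refine ⟨v, Finset.mem_inter.2 ⟨hv, ?_⟩⟩
              rw [hSdef, Finset.mem_filter]
              exact ⟨Finset.mem_univ v, hav⟩
          have h2 : (G.mem e \ S).Nonempty ↔ ¬ a ≤ C := by
            rw [hC]
            rw [show (a ≤ (G.mem e).inf' (G.mem_nonempty e) x) ↔ ∀ v ∈ G.mem e, a ≤ x v from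
              Finset.le_inf'_iff _ _]
            constructor
            · rintro ⟨v, hv⟩ hall
              rw [Finset.mem_sdiff, hSdef, Finset.mem_filter] at hv
              exact hv.2 ⟨Finset.mem_univ v, hall v hv.1⟩
            · intro h
              push_neg at h
              obtain ⟨v, hv, hav⟩ := h
              refine ⟨v, Finset.mem_sdiff.2 ⟨hv, ?_⟩⟩
              rw [hSdef, Finset.mem_filter]
              exact fun hcon => absurd hcon.2 (not_le.2 hav)
          rw [Finset.mem_filter, Finset.mem_filter]
          constructor
          · rintro ⟨⟨_, hB1⟩, ⟨_, hC1⟩⟩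
            exact ⟨h1.2 hB1, h2.2 hC1⟩
          · rintro ⟨hB1, hC1⟩
            exact ⟨⟨hBW, h1.1 hB1⟩, ⟨hCW, h2.1 hC1⟩⟩
      _ = G.cut S := by rw [WHG.cut]
  unfold WHG.cond
  rw [hvol1, hvol2, hcut]

end WHG
end

section
/- Let G = (V, E, w) be a weighted hypergraph with positive degrees, let x ∈ ℝ^V, and let G' be any weighted graph in the family 𝒢(G, x). Then for every ∅ ⊊ S ⊊ V, φ_{G'}(S) ≤ φ_G(S); in particular, φ_{G'} ≤ φ_G. -/
open Finset
open scoped Classical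

namespace WHG

variable {V : Type} [Fintype V] [DecidableEq V] (G : WHG V)

/-- for any collapsed graph `G' ∈ 𝒢(G, x)` the conductance of every
nontrivial vertex set does not exceed its conductance in `G`; in particular
`φ_{G'} ≤ φ_G`. -/
theorem graphFamily_cond_le {V : Type} [Fintype V] [DecidableEq V] (G : WHG V)
    (hd : ∀ v, 0 < G.deg v) (x : V → ℝ) (A : Matrix V V ℝ)
    (hA : G.GraphFamily x A) :
    (∀ S : Finset V, S.Nonempty → S ≠ Finset.univ →
      (∑ u ∈ S, ∑ u' ∈ Sᶜ, A u u') / min (G.vol S) (G.vol Sᶜ) ≤ G.cond S) ∧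
    sInf {c | ∃ S : Finset V, S.Nonempty ∧ S ≠ Finset.univ ∧
        c = (∑ u ∈ S, ∑ u' ∈ Sᶜ, A u u') / min (G.vol S) (G.vol Sᶜ)}
      ≤ G.condG := by
  obtain ⟨hsymm, hnn, hdeg, w', hw'nn, hw'supp, hw'sum, hAoff⟩ := hA
  -- key cut estimate
  have key : ∀ S : Finset V, (∑ u ∈ S, ∑ u' ∈ Sᶜ, A u u') ≤ G.cut S := by
    intro S
    have h1 : ∑ u ∈ S, ∑ u' ∈ Sᶜ, A u u'
        = ∑ u ∈ S, ∑ u' ∈ Sᶜ, ∑ e : G.E, (w' e u u' + w' e u' u) := by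
      refine Finset.sum_congr rfl fun u hu => Finset.sum_congr rfl fun u' hu' => ?_
      have hne : u ≠ u' := by
        intro h; subst h; exact (Finset.mem_compl.mp hu') hu
      exact hAoff u u' hne
    have h2 : ∑ u ∈ S, ∑ u' ∈ Sᶜ, ∑ e : G.E, (w' e u u' + w' e u' u)
        = ∑ e : G.E, ∑ u ∈ S, ∑ u' ∈ Sᶜ, (w' e u u' + w' e u' u) :=
      calc ∑ u ∈ S, ∑ u' ∈ Sᶜ, ∑ e : G.E, (w' e u u' + w' e u' u)
          = ∑ u ∈ S, ∑ e : G.E, ∑ u' ∈ Sᶜ, (w' e u u' + w' e u' u) :=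
            Finset.sum_congr rfl fun u _ =>
              Finset.sum_comm (s := Sᶜ) (t := (Finset.univ : Finset G.E))
                (f := fun u' e => w' e u u' + w' e u' u)
        _ = ∑ e : G.E, ∑ u ∈ S, ∑ u' ∈ Sᶜ, (w' e u u' + w' e u' u) :=
            Finset.sum_comm (s := S) (t := (Finset.univ : Finset G.E))
              (f := fun u e => ∑ u' ∈ Sᶜ, (w' e u u' + w' e u' u))
    rw [h1, h2]
    unfold WHG.cut
    refine Finset.sum_le_sum fun e _ => ?_
    by_cases hc : (G.mem e ∩ S).Nonempty ∧ (G.mem e \ S).Nonempty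
    · rw [if_pos hc, ← hw'sum e]
      have hfull : ∑ u : V, ∑ v : V, w' e u v
          = ((∑ u ∈ S, ∑ v ∈ S, w' e u v) + ∑ u ∈ S, ∑ v ∈ Sᶜ, w' e u v)
          + ((∑ u ∈ Sᶜ, ∑ v ∈ S, w' e u v) + ∑ u ∈ Sᶜ, ∑ v ∈ Sᶜ, w' e u v) := by
        rw [← Finset.sum_add_sum_compl S (fun u => ∑ v : V, w' e u v)]
        congr 1 <;>
        · rw [← Finset.sum_add_distrib]
          exact Finset.sum_congr rfl fun u _ =>
            (Finset.sum_add_sum_compl S (fun v => w' e u v)).symm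
      have htgt : ∑ u ∈ S, ∑ u' ∈ Sᶜ, (w' e u u' + w' e u' u)
          = (∑ u ∈ S, ∑ v ∈ Sᶜ, w' e u v) + ∑ u ∈ Sᶜ, ∑ v ∈ S, w' e u v := by
        have hsplit : ∑ u ∈ S, ∑ u' ∈ Sᶜ, (w' e u u' + w' e u' u)
            = (∑ u ∈ S, ∑ u' ∈ Sᶜ, w' e u u') + ∑ u ∈ S, ∑ u' ∈ Sᶜ, w' e u' u := by
          rw [← Finset.sum_add_distrib]
          exact Finset.sum_congr rfl fun u _ => Finset.sum_add_distrib
        rw [hsplit]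
        congr 1
        exact Finset.sum_comm
      have hA1 : 0 ≤ ∑ u ∈ S, ∑ v ∈ S, w' e u v :=
        Finset.sum_nonneg fun u _ => Finset.sum_nonneg fun v _ => hw'nn e u v
      have hA2 : 0 ≤ ∑ u ∈ Sᶜ, ∑ v ∈ Sᶜ, w' e u v :=
        Finset.sum_nonneg fun u _ => Finset.sum_nonneg fun v _ => hw'nn e u v
      rw [htgt, hfull]; linarith
    · rw [if_neg hc]
      have : ∀ u ∈ S, ∀ u' ∈ Sᶜ, w' e u u' + w' e u' u = 0 := by
        intro u hu u' hu'
        have hu'S : u' ∉ S := Finset.mem_compl.mp hu'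
        have hz1 : w' e u u' = 0 := by
          by_contra h
          obtain ⟨⟨hum, _⟩, ⟨hu'm, _⟩⟩ := hw'supp e u u' h
          exact hc ⟨⟨u, Finset.mem_inter.mpr ⟨hum, hu⟩⟩,
            ⟨u', Finset.mem_sdiff.mpr ⟨hu'm, hu'S⟩⟩⟩
        have hz2 : w' e u' u = 0 := by
          by_contra h
          obtain ⟨⟨hu'm, _⟩, ⟨hum, _⟩⟩ := hw'supp e u' u h
          exact hc ⟨⟨u, Finset.mem_inter.mpr ⟨hum, hu⟩⟩,
            ⟨u', Finset.mem_sdiff.mpr ⟨hu'm, hu'S⟩⟩⟩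
        rw [hz1, hz2, add_zero]
      rw [Finset.sum_congr rfl (fun u hu => Finset.sum_eq_zero (this u hu)),
        Finset.sum_const_zero]
  have hvolpos : ∀ S : Finset V, S.Nonempty → 0 < G.vol S := fun S hS =>
    Finset.sum_pos (fun v _ => hd v) hS
  have hmain : ∀ S : Finset V, S.Nonempty → S ≠ Finset.univ →
      (∑ u ∈ S, ∑ u' ∈ Sᶜ, A u u') / min (G.vol S) (G.vol Sᶜ) ≤ G.cond S := by
    intro S hS hSu
    have hSc : Sᶜ.Nonempty := (Finset.compl_ne_univ_iff_nonempty Sᶜ).mp (by rwa [compl_compl])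
    have hmin : 0 < min (G.vol S) (G.vol Sᶜ) :=
      lt_min (hvolpos S hS) (hvolpos Sᶜ hSc)
    unfold WHG.cond
    exact div_le_div_of_nonneg_right (key S) hmin.le
  refine ⟨hmain, ?_⟩
  by_cases hex : ∃ S : Finset V, S.Nonempty ∧ S ≠ Finset.univ
  · obtain ⟨S₀, hS₀, hS₀u⟩ := hex
    unfold WHG.condG
    have hbdd : BddBelow {c | ∃ S : Finset V, S.Nonempty ∧ S ≠ Finset.univ ∧
        c = (∑ u ∈ S, ∑ u' ∈ Sᶜ, A u u') / min (G.vol S) (G.vol Sᶜ)} := by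
      refine ⟨0, fun c hc => ?_⟩
      obtain ⟨S, hS, hSu, rfl⟩ := hc
      have hmin : 0 < min (G.vol S) (G.vol Sᶜ) :=
        lt_min (hvolpos S hS) (hvolpos Sᶜ ((Finset.compl_ne_univ_iff_nonempty Sᶜ).mp (by rwa [compl_compl])))
      exact div_nonneg (Finset.sum_nonneg fun u _ =>
        Finset.sum_nonneg fun u' _ => hnn u u') hmin.le
    refine le_csInf ⟨G.cond S₀, S₀, hS₀, hS₀u, rfl⟩ ?_
    rintro c ⟨S, hS, hSu, rfl⟩
    exact le_trans (csInf_le hbdd ⟨S, hS, hSu, rfl⟩) (hmain S hS hSu)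
  · have h1 : {c | ∃ S : Finset V, S.Nonempty ∧ S ≠ Finset.univ ∧
        c = (∑ u ∈ S, ∑ u' ∈ Sᶜ, A u u') / min (G.vol S) (G.vol Sᶜ)} = ∅ := by
      ext c; simp only [Set.mem_setOf_eq, Set.mem_empty_iff_false, iff_false]
      rintro ⟨S, hS, hSu, _⟩; exact hex ⟨S, hS, hSu⟩
    have h2 : {c | ∃ S : Finset V, S.Nonempty ∧ S ≠ Finset.univ ∧ c = G.cond S} = ∅ := by
      ext c; simp only [Set.mem_setOf_eq, Set.mem_empty_iff_false, iff_false]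
      rintro ⟨S, hS, hSu, _⟩; exact hex ⟨S, hS, hSu⟩
    unfold WHG.condG
    rw [h1, h2]

end WHG
end

section
/- Let H be a weighted graph on a finite vertex set V with positive degrees, let s ∈ ℝ^V with ∑_{v ∈ V} s(v) = 1, and define f(Δ) = sᵀ D⁻¹ (e^{−Δ𝓛} s − π). Let Δ ≥ 0 with f(Δ) > 0, and set μ = D⁻¹ e^{−(Δ/2)𝓛} s. Then the function Δ ↦ log f(Δ) is differentiable at Δ with derivative equal to −R(μ − (1/vol(V))𝟙), where R(z) = zᵀ(D − A)z / (zᵀ D z) is the Rayleigh quotient and 𝟙 is the all-one vector. -/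
open Finset
open scoped Classical Matrix
open NormedSpace

namespace GraphHeat

variable {V : Type} [Fintype V] [DecidableEq V]

/-- Degree in a weighted graph given by its adjacency matrix. -/
noncomputable def deg (A : Matrix V V ℝ) (v : V) : ℝ := ∑ u, A v u

/-- Normalized Laplacian `𝓛 = I − A D⁻¹`. -/
noncomputable def nlap (A : Matrix V V ℝ) : Matrix V V ℝ :=
  1 - A * Matrix.diagonal (fun v => (deg A v)⁻¹)

/-- The heat semigroup `e^{−Δ𝓛} s`. -/
noncomputable def heat (A : Matrix V V ℝ) (Δ : ℝ) (s : V → ℝ) : V → ℝ :=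
  (NormedSpace.exp (-(Δ • nlap A))).mulVec s

/-- Stationary vector `π`. -/
noncomputable def piV (A : Matrix V V ℝ) : V → ℝ := fun v => deg A v / ∑ u, deg A u


attribute [local instance] Matrix.linftyOpNormedAddCommGroup Matrix.linftyOpNormedRing
  Matrix.linftyOpNormedAlgebra Matrix.linftyOpNormedSpace

private lemma colsum_A (A : Matrix V V ℝ) (hsym : A.IsSymm) (v : V) :
    ∑ u, A u v = deg A v :=
  Finset.sum_congr rfl fun u _ => hsym.apply v u

private lemma colsum_nlap (A : Matrix V V ℝ) (hsym : A.IsSymm) (hd : ∀ v, 0 < deg A v) (v : V) :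
    ∑ u, nlap A u v = 0 := by
  simp only [nlap, Matrix.sub_apply, Matrix.mul_diagonal, Finset.sum_sub_distrib]
  rw [← Finset.sum_mul, colsum_A A hsym, mul_inv_cancel₀ (hd v).ne']
  simp [Matrix.one_apply]

private lemma colsum_exp (A : Matrix V V ℝ) (hsym : A.IsSymm) (hd : ∀ v, 0 < deg A v)
    (t : ℝ) (v : V) : ∑ u, (exp (t • (-nlap A))) u v = 1 := by
  set X : Matrix V V ℝ := t • (-nlap A) with hX
  have hXcol : ∀ w, ∑ u, X u w = 0 := by
    intro w
    simp only [hX, Matrix.smul_apply, Matrix.neg_apply, smul_eq_mul]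
    rw [← Finset.mul_sum, Finset.sum_neg_distrib, colsum_nlap A hsym hd w]
    simp
  have hpowcol : ∀ n : ℕ, ∑ u, (X ^ n) u v = if n = 0 then 1 else 0 := by
    intro n
    cases n with
    | zero => simp [Matrix.one_apply]
    | succ m =>
      rw [pow_succ']
      simp only [Matrix.mul_apply]
      rw [Finset.sum_comm]
      simp only [← Finset.sum_mul, hXcol]
      simp
  let F : Matrix V V ℝ →ₗ[ℝ] ℝ :=
    { toFun := fun M => ∑ u, M u v
      map_add' := fun M N => by simp [Finset.sum_add_distrib]
      map_smul' := fun c M => by simp [Finset.mul_sum] }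
  have hFc : F (exp X) = ∑' n : ℕ, F (((n.factorial : ℝ))⁻¹ • X ^ n) := by
    rw [exp_eq_tsum (𝕂 := ℝ)]
    exact F.toContinuousLinearMap.map_tsum (expSeries_summable' X)
  have hFval : ∀ n : ℕ, F (((n.factorial : ℝ))⁻¹ • X ^ n)
      = if n = 0 then 1 else 0 := by
    intro n
    have : F (((n.factorial : ℝ))⁻¹ • X ^ n) = ((n.factorial : ℝ))⁻¹ * ∑ u, (X ^ n) u v := by
      simp [F, Finset.mul_sum]
    rw [this, hpowcol]
    cases n <;> simp
  have : F (exp X) = 1 := by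
    rw [hFc]
    rw [tsum_congr hFval, tsum_eq_single 0 (by intro b hb; simp [hb])]
    simp
  simpa [F] using this


private lemma rev_exp (A : Matrix V V ℝ) (hsym : A.IsSymm) (hd : ∀ v, 0 < deg A v)
    (t : ℝ) :
    Matrix.diagonal (fun v => (deg A v)⁻¹) * exp (t • (-nlap A))
      = (exp (t • (-nlap A)))ᵀ * Matrix.diagonal (fun v => (deg A v)⁻¹) := by
  set Di : Matrix V V ℝ := Matrix.diagonal (fun v => (deg A v)⁻¹) with hDi
  set Dg : Matrix V V ℝ := Matrix.diagonal (deg A) with hDg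
  have hDiD : Di * Dg = 1 := by
    rw [hDi, hDg, Matrix.diagonal_mul_diagonal]
    convert Matrix.diagonal_one with v
    exact inv_mul_cancel₀ (hd v).ne'
  have hDDi : Dg * Di = 1 := by
    rw [hDg, hDi, Matrix.diagonal_mul_diagonal]
    convert Matrix.diagonal_one with v
    exact mul_inv_cancel₀ (hd v).ne'
  set U : (Matrix V V ℝ)ˣ := ⟨Di, Dg, hDiD, hDDi⟩ with hU
  have hBt : Di * (t • (-nlap A)) * Dg = (t • (-nlap A))ᵀ := by
    rw [Matrix.mul_smul, Matrix.smul_mul, Matrix.transpose_smul]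
    congr 1
    have h1 : Di * (-nlap A) * Dg = Di * A - 1 := by
      rw [nlap, neg_sub, ← hDi]
      calc Di * (A * Di - 1) * Dg
          = Di * A * (Di * Dg) - Di * Dg := by noncomm_ring
        _ = Di * A - 1 := by rw [hDiD, Matrix.mul_one]
    have h2 : (-nlap A)ᵀ = Di * A - 1 := by
      rw [nlap, Matrix.transpose_neg, Matrix.transpose_sub, Matrix.transpose_one,
        Matrix.transpose_mul, Matrix.diagonal_transpose, hsym.eq, neg_sub]
    rw [h1, h2]
  have hconj := Matrix.exp_units_conj U (t • (-nlap A))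
  have hmain : exp ((t • (-nlap A))ᵀ) = Di * exp (t • (-nlap A)) * Dg := by
    rw [← hBt]
    exact hconj
  have htr := Matrix.exp_transpose (t • (-nlap A))
  have : (exp (t • (-nlap A)))ᵀ = Di * exp (t • (-nlap A)) * Dg := by
    rw [← htr, hmain]
  rw [this, Matrix.mul_assoc, Matrix.mul_assoc, hDDi, Matrix.mul_one]

private lemma comm_exp (A : Matrix V V ℝ) (t : ℝ) :
    nlap A * exp (t • (-nlap A)) = exp (t • (-nlap A)) * nlap A :=
  (((Commute.refl (nlap A)).neg_right).smul_right t).exp_right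

private lemma semigroup_exp (A : Matrix V V ℝ) (Δ : ℝ) :
    exp (Δ • (-nlap A)) = exp ((Δ/2) • (-nlap A)) * exp ((Δ/2) • (-nlap A)) := by
  rw [← Matrix.exp_add_of_commute _ _ (Commute.refl _), ← add_smul, add_halves]


/-- Lemma 4.2: `Δ ↦ log f(Δ)` with `f(Δ) = sᵀ D⁻¹(e^{−Δ𝓛}s − π)` is
differentiable at any `Δ ≥ 0` with `f(Δ) > 0`, with derivative the negated Rayleigh
quotient of `μ − (1/vol(V))𝟙`, where `μ = D⁻¹ e^{−(Δ/2)𝓛} s`. -/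
theorem log_f_hasDerivAt {V : Type} [Fintype V] [DecidableEq V]
    (A : Matrix V V ℝ) (hsym : A.IsSymm) (hnn : ∀ u v, 0 ≤ A u v)
    (hd : ∀ v, 0 < deg A v) (s : V → ℝ) (hs : ∑ v, s v = 1) (Δ : ℝ) (hΔ : 0 ≤ Δ)
    (hf : 0 < ∑ v, s v * (heat A Δ s v - piV A v) / deg A v) :
    let z : V → ℝ := fun v => heat A (Δ/2) s v / deg A v - 1 / ∑ u, deg A u
    HasDerivAt (fun Δ' => Real.log (∑ v, s v * (heat A Δ' s v - piV A v) / deg A v))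
      (-((∑ u, ∑ v, ((if u = v then deg A u else 0) - A u v) * z u * z v)
          / (∑ v, deg A v * z v ^ 2))) Δ := by
  intro z
  have hheat : ∀ (t : ℝ), heat A t s = (exp (t • (-nlap A))).mulVec s := by
    intro t; rw [heat, smul_neg]
  -- the continuous linear functional M ↦ sᵀ D⁻¹ M s
  let Φ₀ : Matrix V V ℝ →ₗ[ℝ] ℝ :=
    { toFun := fun M => ∑ v, s v * M.mulVec s v / deg A v
      map_add' := fun M N => by
        simp [Matrix.add_mulVec, Pi.add_apply, mul_add, add_div, Finset.sum_add_distrib]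
      map_smul' := fun c M => by
        simp only [Matrix.smul_mulVec, Pi.smul_apply, smul_eq_mul, RingHom.id_apply]
        rw [Finset.mul_sum]
        exact Finset.sum_congr rfl fun v _ => by ring }
  let Φ : Matrix V V ℝ →L[ℝ] ℝ := Φ₀.toContinuousLinearMap
  have hE : HasDerivAt (fun t : ℝ => exp (t • (-nlap A)))
      (exp (Δ • (-nlap A)) * (-nlap A)) Δ := hasDerivAt_exp_smul_const _ Δ
  have hΦE : HasDerivAt (fun t : ℝ => Φ (exp (t • (-nlap A))))
      (Φ (exp (Δ • (-nlap A)) * (-nlap A))) Δ :=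
    Φ.hasFDerivAt.comp_hasDerivAt Δ hE
  have hfun : (fun t : ℝ => ∑ v, s v * (heat A t s v - piV A v) / deg A v)
      = fun t : ℝ => Φ (exp (t • (-nlap A))) - ∑ v, s v * piV A v / deg A v := by
    funext t
    have hΦ : Φ (exp (t • (-nlap A))) = ∑ v, s v * (exp (t • (-nlap A))).mulVec s v / deg A v := rfl
    rw [hΦ, ← Finset.sum_sub_distrib]
    refine Finset.sum_congr rfl fun v _ => ?_
    rw [hheat]
    show s v * (_ - _) / deg A v = s v * _ / deg A v - _
    ring
  have hF : HasDerivAt (fun t : ℝ => ∑ v, s v * (heat A t s v - piV A v) / deg A v)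
      (Φ (exp (Δ • (-nlap A)) * (-nlap A))) Δ := by
    rw [hfun]; exact hΦE.sub_const _
  have hlog := hF.log (ne_of_gt hf)
  convert hlog using 1
  -- now the value computation
  set W : Matrix V V ℝ := exp ((Δ/2) • (-nlap A)) with hW
  set w : V → ℝ := W.mulVec s with hw
  set vol : ℝ := ∑ u, deg A u with hvoldef
  have hne : Nonempty V := by
    by_contra h
    rw [not_nonempty_iff] at h
    simp [Finset.univ_eq_empty] at hf
  obtain ⟨v0⟩ := hne
  have hvol : 0 < vol := Finset.sum_pos (fun v _ => hd v) ⟨v0, Finset.mem_univ _⟩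
  have hrev : ∀ u v, (deg A u)⁻¹ * W u v = W v u * (deg A v)⁻¹ := by
    intro u v
    have h := rev_exp A hsym hd (Δ/2)
    have := congrFun (congrFun h u) v
    simpa only [Matrix.diagonal_mul, Matrix.mul_diagonal, Matrix.transpose_apply] using this
  have hwdef : ∀ u, w u = ∑ v, W u v * s v := by
    intro u; simp [hw, Matrix.mulVec, dotProduct]
  have hw1 : ∑ v, w v = 1 := by
    rw [show ∑ v, w v = ∑ v, ∑ u, W v u * s u from Finset.sum_congr rfl fun v _ => hwdef v]
    rw [Finset.sum_comm]
    calc ∑ u, ∑ v, W v u * s u = ∑ u, (∑ v, W v u) * s u := by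
          exact Finset.sum_congr rfl fun u _ => (Finset.sum_mul _ _ _).symm
      _ = ∑ u, s u := by
          refine Finset.sum_congr rfl fun u _ => ?_
          rw [colsum_exp A hsym hd (Δ/2) u, one_mul]
      _ = 1 := hs
  have key : ∀ x : V → ℝ, ∑ v, s v * (W.mulVec x) v / deg A v
      = ∑ u, (w u / deg A u) * x u := by
    intro x
    calc ∑ v, s v * (W.mulVec x) v / deg A v
        = ∑ v, ∑ u, s v * W v u * x u / deg A v := by
          refine Finset.sum_congr rfl fun v _ => ?_
          simp only [Matrix.mulVec, dotProduct]
          rw [Finset.mul_sum, Finset.sum_div]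
          exact Finset.sum_congr rfl fun u _ => by ring
      _ = ∑ v, ∑ u, W u v * s v * x u / deg A u := by
          refine Finset.sum_congr rfl fun v _ => Finset.sum_congr rfl fun u _ => ?_
          rw [div_eq_mul_inv, div_eq_mul_inv]
          linear_combination (-(s v * x u)) * hrev u v
      _ = ∑ u, ∑ v, W u v * s v * x u / deg A u := Finset.sum_comm
      _ = ∑ u, (w u / deg A u) * x u := by
          refine Finset.sum_congr rfl fun u _ => ?_
          rw [hwdef u, Finset.sum_div, Finset.sum_mul]
          exact Finset.sum_congr rfl fun v _ => by ring
  have hz : ∀ v, z v = w v / deg A v - 1 / vol := by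
    intro v
    show heat A (Δ/2) s v / deg A v - 1 / vol = w v / deg A v - 1 / vol
    rw [hheat]
  have hpi : ∑ v, s v * piV A v / deg A v = 1 / vol := by
    have : ∀ v : V, s v * piV A v / deg A v = s v * (1 / vol) := by
      intro v
      rw [piV, ← hvoldef]
      field_simp
      apply (div_eq_iff (hd v).ne').mpr
      ring
    rw [Finset.sum_congr rfl fun v _ => this v, ← Finset.sum_mul, hs, one_mul]
  have hheatΔ : heat A Δ s = W.mulVec w := by
    rw [hheat, semigroup_exp, ← hW, hw, ← Matrix.mulVec_mulVec]
  have h1 : ∑ v, s v * (heat A Δ s v - piV A v) / deg A v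
      = (∑ u, (w u / deg A u) * w u) - 1 / vol := by
    calc ∑ v, s v * (heat A Δ s v - piV A v) / deg A v
        = ∑ v, (s v * (W.mulVec w) v / deg A v - s v * piV A v / deg A v) := by
          refine Finset.sum_congr rfl fun v _ => ?_
          rw [hheatΔ]; ring
      _ = (∑ v, s v * (W.mulVec w) v / deg A v) - ∑ v, s v * piV A v / deg A v :=
          Finset.sum_sub_distrib _ _
      _ = (∑ u, (w u / deg A u) * w u) - 1 / vol := by rw [key w, hpi]
  have h2 : ∑ v, deg A v * z v ^ 2 = (∑ u, (w u / deg A u) * w u) - 1 / vol := by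
    have hterm : ∀ v, deg A v * z v ^ 2
        = (w v / deg A v) * w v - w v * (2 / vol) + deg A v * (1 / vol ^ 2) := by
      intro v
      have hdv : deg A v ≠ 0 := (hd v).ne'
      have hv0 : vol ≠ 0 := hvol.ne'
      rw [hz v]
      field_simp
      ring
    rw [Finset.sum_congr rfl fun v _ => hterm v, Finset.sum_add_distrib,
      Finset.sum_sub_distrib, ← Finset.sum_mul, ← Finset.sum_mul, hw1, ← hvoldef]
    field_simp
    ring
  -- E2 : the derivative value
  have hcommW : (-nlap A) * W = W * (-nlap A) := by
    rw [neg_mul, Matrix.mul_neg, comm_exp A (Δ/2), ← hW]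
  have hmat : exp (Δ • (-nlap A)) * (-nlap A) = W * ((-nlap A) * W) := by
    rw [semigroup_exp, ← hW, Matrix.mul_assoc]
    congr 1
    exact hcommW.symm
  have hnegnlap : -nlap A = A * Matrix.diagonal (fun v => (deg A v)⁻¹) - 1 := by
    rw [nlap, neg_sub]
  have hy : ∀ u, ((-nlap A).mulVec w) u = (∑ x, A u x * (deg A x)⁻¹ * w x) - w u := by
    intro u
    rw [hnegnlap, Matrix.sub_mulVec, Matrix.one_mulVec, Pi.sub_apply]
    congr 1
    simp [Matrix.mulVec, dotProduct, Matrix.mul_diagonal]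
  have hΦval : Φ (exp (Δ • (-nlap A)) * (-nlap A))
      = (∑ u, ∑ x, (w u / deg A u) * A u x * (w x / deg A x))
        - ∑ u, (w u / deg A u) * w u := by
    have h0 : Φ (exp (Δ • (-nlap A)) * (-nlap A))
        = ∑ v, s v * ((exp (Δ • (-nlap A)) * (-nlap A)).mulVec s) v / deg A v := rfl
    have h1' : (exp (Δ • (-nlap A)) * (-nlap A)).mulVec s
        = W.mulVec ((-nlap A).mulVec w) := by
      rw [hmat, ← Matrix.mulVec_mulVec, ← Matrix.mulVec_mulVec, ← hw]
    rw [h0, h1', key ((-nlap A).mulVec w)]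
    calc ∑ u, (w u / deg A u) * ((-nlap A).mulVec w) u
        = ∑ u, ((∑ x, (w u / deg A u) * A u x * (w x / deg A x))
            - (w u / deg A u) * w u) := by
          refine Finset.sum_congr rfl fun u _ => ?_
          rw [hy u, mul_sub, Finset.mul_sum]
          congr 1
          refine Finset.sum_congr rfl fun x _ => ?_
          rw [div_eq_mul_inv, div_eq_mul_inv]
          ring
      _ = _ := Finset.sum_sub_distrib _ _
  -- E3 : the numerator identity
  have hdiag : ∀ u, ∑ v, (if u = v then deg A u else 0) * z u * z v
      = deg A u * z u * z u := by
    intro u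
    rw [Finset.sum_eq_single u]
    · rw [if_pos rfl]
    · intro b _ hb
      rw [if_neg fun h => hb h.symm, zero_mul, zero_mul]
    · intro h; exact absurd (Finset.mem_univ u) h
  have hsplit : (∑ u, ∑ v, ((if u = v then deg A u else 0) - A u v) * z u * z v)
      = (∑ u, deg A u * z u ^ 2) - ∑ u, ∑ v, A u v * z u * z v := by
    calc ∑ u, ∑ v, ((if u = v then deg A u else 0) - A u v) * z u * z v
        = ∑ u, ((∑ v, (if u = v then deg A u else 0) * z u * z v)
            - ∑ v, A u v * z u * z v) := by
          refine Finset.sum_congr rfl fun u _ => ?_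
          rw [← Finset.sum_sub_distrib]
          exact Finset.sum_congr rfl fun v _ => by ring
      _ = (∑ u, deg A u * z u ^ 2) - ∑ u, ∑ v, A u v * z u * z v := by
          rw [Finset.sum_sub_distrib]
          congr 1
          refine Finset.sum_congr rfl fun u _ => ?_
          rw [hdiag u]; ring
  have hrowsum : ∀ u, ∑ v, A u v = deg A u := fun u => rfl
  have hmu1 : ∑ u, (w u / deg A u) * deg A u = 1 := by
    rw [Finset.sum_congr rfl fun u _ => div_mul_cancel₀ (w u) (hd u).ne', hw1]
  have hSz : ∑ u, ∑ v, A u v * z u * z v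
      = (∑ u, ∑ x, (w u / deg A u) * A u x * (w x / deg A x))
        - (1 / vol) - (1 / vol) + vol * (1 / vol) ^ 2 := by
    have hP2 : ∑ u, ∑ v, A u v * ((w u / deg A u) * (1 / vol)) = 1 / vol := by
      have : ∀ u, ∑ v, A u v * ((w u / deg A u) * (1 / vol))
          = (w u / deg A u) * deg A u * (1 / vol) := by
        intro u
        rw [← Finset.sum_mul, hrowsum u]
        ring
      rw [Finset.sum_congr rfl fun u _ => this u]
      rw [Finset.sum_congr rfl fun u _ => rfl, ← Finset.sum_mul, hmu1, one_mul]
    have hP3 : ∑ u, ∑ v, A u v * ((w v / deg A v) * (1 / vol)) = 1 / vol := by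
      rw [Finset.sum_comm]
      have hterm3 : ∀ v, ∑ u, A u v * ((w v / deg A v) * (1 / vol))
          = w v * (1 / vol) := by
        intro v
        rw [← Finset.sum_mul, colsum_A A hsym v, ← mul_assoc,
          mul_comm (deg A v) (w v / deg A v), div_mul_cancel₀ (w v) (hd v).ne']
      rw [Finset.sum_congr rfl fun v _ => hterm3 v, ← Finset.sum_mul, hw1, one_mul]
    have hP4 : ∑ u, ∑ v, A u v * ((1 / vol) ^ 2) = vol * (1 / vol) ^ 2 := by
      have : ∀ u, ∑ v, A u v * ((1 / vol) ^ 2) = deg A u * (1 / vol) ^ 2 := by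
        intro u
        rw [← Finset.sum_mul, hrowsum u]
      rw [Finset.sum_congr rfl fun u _ => this u, ← Finset.sum_mul, ← hvoldef]
    calc ∑ u, ∑ v, A u v * z u * z v
        = ∑ u, ∑ v, ((w u / deg A u) * A u v * (w v / deg A v)
            - A u v * ((w u / deg A u) * (1 / vol))
            - A u v * ((w v / deg A v) * (1 / vol))
            + A u v * ((1 / vol) ^ 2)) := by
          refine Finset.sum_congr rfl fun u _ => Finset.sum_congr rfl fun v _ => ?_
          rw [hz u, hz v]
          ring
      _ = (∑ u, ∑ x, (w u / deg A u) * A u x * (w x / deg A x))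
            - (1 / vol) - (1 / vol) + vol * (1 / vol) ^ 2 := by
          simp only [Finset.sum_add_distrib, Finset.sum_sub_distrib]
          rw [hP2, hP3, hP4]
  -- assemble
  have hv0 : vol ≠ 0 := hvol.ne'
  have hnum : (∑ u, ∑ v, ((if u = v then deg A u else 0) - A u v) * z u * z v)
      = (∑ u, (w u / deg A u) * w u)
        - ∑ u, ∑ x, (w u / deg A u) * A u x * (w x / deg A x) := by
    rw [hsplit, h2, hSz]
    field_simp
    ring
  rw [show (∑ v, s v * (heat A Δ s v - piV A v) / deg A v)
      = ∑ v, deg A v * z v ^ 2 from h1.trans h2.symm, hΦval, hnum]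
  ring

end GraphHeat
end

section
/- Let H be a weighted graph on a finite vertex set V with positive degrees, let s ∈ ℝ^V with ∑_{v ∈ V} s(v) = 1, and define f(Δ) = sᵀ D⁻¹ (e^{−Δ𝓛} s − π). Then for every Δ ≥ 0, f(Δ) · (sᵀ D⁻¹ 𝓛² e^{−Δ𝓛} s) ≥ (sᵀ D⁻¹ 𝓛 e^{−Δ𝓛} s)². Consequently, if s ≠ π, then f(Δ) > 0 for all Δ ≥ 0 and the function Δ ↦ log f(Δ) is convex on [0, ∞). -/
open Finset
open scoped Classical

namespace GraphHeat

variable {V : Type} [Fintype V] [DecidableEq V]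

/-! ### Auxiliary material -/

open Matrix
open scoped Nat

set_option linter.unusedSectionVars false

/-- exp of a matrix fixes kernel vectors. -/
lemma exp_mulVec_fixed (M : Matrix V V ℝ) {v : V → ℝ} (h : M.mulVec v = 0) :
    (NormedSpace.exp M).mulVec v = v := by
  letI : SeminormedRing (Matrix V V ℝ) := Matrix.linftyOpSemiNormedRing
  letI : NormedRing (Matrix V V ℝ) := Matrix.linftyOpNormedRing
  letI : NormedAlgebra ℝ (Matrix V V ℝ) := Matrix.linftyOpNormedAlgebra
  have hsum : Summable (fun n : ℕ => ((n ! : ℝ))⁻¹ • M ^ n) :=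
    NormedSpace.expSeries_summable' (𝕂 := ℝ) M
  let l : Matrix V V ℝ →ₗ[ℝ] (V → ℝ) :=
    { toFun := fun N => N.mulVec v
      map_add' := fun N₁ N₂ => Matrix.add_mulVec _ _ _
      map_smul' := fun c N => Matrix.smul_mulVec c N v }
  have lc : Continuous l := l.continuous_of_finiteDimensional
  have h0 : (NormedSpace.exp M).mulVec v = ∑' n : ℕ, l (((n ! : ℝ))⁻¹ • M ^ n) := by
    rw [NormedSpace.exp_eq_tsum (𝕂 := ℝ)]
    exact ((hsum.hasSum.map l.toAddMonoidHom lc).tsum_eq).symm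
  have hterm : ∀ n : ℕ, n ≠ 0 → l (((n ! : ℝ))⁻¹ • M ^ n) = 0 := by
    rintro (_ | n) hn
    · simp at hn
    · simp only [l, LinearMap.coe_mk, AddHom.coe_mk]
      rw [pow_succ, Matrix.smul_mulVec, ← Matrix.mulVec_mulVec, h, Matrix.mulVec_zero,
        smul_zero]
  rw [h0, tsum_eq_single 0 hterm]
  simp [l]

lemma commute_exp {M N : Matrix V V ℝ} (h : Commute M N) :
    Commute M (NormedSpace.exp N) := by
  letI : SeminormedRing (Matrix V V ℝ) := Matrix.linftyOpSemiNormedRing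
  letI : NormedRing (Matrix V V ℝ) := Matrix.linftyOpNormedRing
  letI : NormedAlgebra ℝ (Matrix V V ℝ) := Matrix.linftyOpNormedAlgebra
  exact h.exp_right

lemma sym_L (A : Matrix V V ℝ) (hsym : A.IsSymm) :
    ((Matrix.diagonal fun v => (deg A v)⁻¹) * nlap A)ᵀ
      = (Matrix.diagonal fun v => (deg A v)⁻¹) * nlap A := by
  simp [nlap, Matrix.mul_sub, Matrix.mul_one, Matrix.transpose_sub, Matrix.transpose_mul,
    Matrix.diagonal_transpose, hsym.eq, Matrix.mul_assoc]

lemma symT {A M : Matrix V V ℝ}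
    (hM : ((Matrix.diagonal fun v => (deg A v)⁻¹) * M)ᵀ
      = (Matrix.diagonal fun v => (deg A v)⁻¹) * M) :
    Mᵀ * (Matrix.diagonal fun v => (deg A v)⁻¹)
      = (Matrix.diagonal fun v => (deg A v)⁻¹) * M := by
  calc Mᵀ * (Matrix.diagonal fun v => (deg A v)⁻¹)
      = Mᵀ * (Matrix.diagonal fun v => (deg A v)⁻¹)ᵀ := by rw [Matrix.diagonal_transpose]
    _ = ((Matrix.diagonal fun v => (deg A v)⁻¹) * M)ᵀ := (Matrix.transpose_mul _ _).symm
    _ = _ := hM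

lemma sym_mul {A M N : Matrix V V ℝ}
    (hM : ((Matrix.diagonal fun v => (deg A v)⁻¹) * M)ᵀ
      = (Matrix.diagonal fun v => (deg A v)⁻¹) * M)
    (hN : ((Matrix.diagonal fun v => (deg A v)⁻¹) * N)ᵀ
      = (Matrix.diagonal fun v => (deg A v)⁻¹) * N)
    (hc : Commute M N) :
    ((Matrix.diagonal fun v => (deg A v)⁻¹) * (M * N))ᵀ
      = (Matrix.diagonal fun v => (deg A v)⁻¹) * (M * N) := by
  set Di := (Matrix.diagonal fun v => (deg A v)⁻¹)
  calc (Di * (M * N))ᵀ = (M * N)ᵀ * Diᵀ := Matrix.transpose_mul _ _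
    _ = Nᵀ * Mᵀ * Di := by rw [Matrix.transpose_mul, Matrix.diagonal_transpose]
    _ = Nᵀ * (Mᵀ * Di) := Matrix.mul_assoc _ _ _
    _ = Nᵀ * (Di * M) := by rw [symT hM]
    _ = (Nᵀ * Di) * M := (Matrix.mul_assoc _ _ _).symm
    _ = (Di * N) * M := by rw [symT hN]
    _ = Di * (N * M) := Matrix.mul_assoc _ _ _
    _ = Di * (M * N) := by rw [hc.eq]

lemma sym_exp (A : Matrix V V ℝ) (hsym : A.IsSymm) (hd : ∀ v, 0 < deg A v) (c : ℝ) :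
    ((Matrix.diagonal fun v => (deg A v)⁻¹) * NormedSpace.exp (c • nlap A))ᵀ
      = (Matrix.diagonal fun v => (deg A v)⁻¹) * NormedSpace.exp (c • nlap A) := by
  set Di := (Matrix.diagonal fun v => (deg A v)⁻¹) with hDi
  set Dd := Matrix.diagonal (deg A) with hDd
  set L := nlap A with hLdef
  have h1 : Dd * Di = 1 := by
    rw [hDd, hDi, Matrix.diagonal_mul_diagonal]
    convert Matrix.diagonal_one
    exact mul_inv_cancel₀ (hd _).ne'
  have h2 : Di * Dd = 1 := by
    rw [hDd, hDi, Matrix.diagonal_mul_diagonal]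
    convert Matrix.diagonal_one
    exact inv_mul_cancel₀ (hd _).ne'
  have hLt : Lᵀ * Di = Di * L := symT (sym_L A hsym)
  have hLconj : (c • L)ᵀ = Di * (c • L) * Dd := by
    have hL : Lᵀ = Di * L * Dd := by
      calc Lᵀ = Lᵀ * (Di * Dd) := by rw [h2, Matrix.mul_one]
        _ = (Lᵀ * Di) * Dd := (Matrix.mul_assoc _ _ _).symm
        _ = Di * L * Dd := by rw [hLt]
    rw [Matrix.transpose_smul, hL, Matrix.mul_smul, Matrix.smul_mul]
  set u : (Matrix V V ℝ)ˣ := ⟨Dd, Di, h1, h2⟩ with hu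
  have hexp : (NormedSpace.exp (c • L))ᵀ = Di * NormedSpace.exp (c • L) * Dd := by
    rw [← Matrix.exp_transpose, hLconj]
    have h3 := Matrix.exp_units_conj' u (c • L)
    simpa [hu] using h3
  calc (Di * NormedSpace.exp (c • L))ᵀ
      = (NormedSpace.exp (c • L))ᵀ * Diᵀ := Matrix.transpose_mul _ _
    _ = (Di * NormedSpace.exp (c • L) * Dd) * Di := by rw [hexp, Matrix.diagonal_transpose]
    _ = Di * NormedSpace.exp (c • L) * (Dd * Di) := by rw [Matrix.mul_assoc]
    _ = Di * NormedSpace.exp (c • L) := by rw [h1, Matrix.mul_one]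

/-- The inner product weighted by inverse degrees. -/
noncomputable def ip (A : Matrix V V ℝ) (x y : V → ℝ) : ℝ := ∑ v, x v * y v / deg A v

lemma ip_move {A M : Matrix V V ℝ}
    (hM : ((Matrix.diagonal fun v => (deg A v)⁻¹) * M)ᵀ
      = (Matrix.diagonal fun v => (deg A v)⁻¹) * M)
    (x y : V → ℝ) : ip A x (M.mulVec y) = ip A (M.mulVec x) y := by
  have hent : ∀ u v, (deg A u)⁻¹ * M u v = (deg A v)⁻¹ * M v u := by
    intro u v
    have h := congrFun (congrFun hM v) u
    simpa [Matrix.transpose_apply, Matrix.diagonal_mul] using h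
  have key : ∀ (x y : V → ℝ), ∑ v, x v * (∑ u, M v u * y u) / deg A v
      = ∑ v, ∑ u, ((deg A v)⁻¹ * M v u) * (x v * y u) := by
    intro x y
    refine Finset.sum_congr rfl fun v _ => ?_
    rw [div_eq_mul_inv, Finset.mul_sum, Finset.sum_mul]
    exact Finset.sum_congr rfl fun u _ => by ring
  have key2 : ∀ (x y : V → ℝ), ∑ v, (∑ u, M v u * x u) * y v / deg A v
      = ∑ v, ∑ u, ((deg A v)⁻¹ * M v u) * (x u * y v) := by
    intro x y
    refine Finset.sum_congr rfl fun v _ => ?_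
    rw [div_eq_mul_inv, Finset.sum_mul, Finset.sum_mul]
    exact Finset.sum_congr rfl fun u _ => by ring
  show ∑ v, x v * (∑ u, M v u * y u) / deg A v = ∑ v, (∑ u, M v u * x u) * y v / deg A v
  rw [key, key2, Finset.sum_comm]
  refine Finset.sum_congr rfl fun u _ => Finset.sum_congr rfl fun v _ => ?_
  rw [hent v u]

lemma ip_cs (A : Matrix V V ℝ) (hd : ∀ v, 0 < deg A v) (x y : V → ℝ) :
    (ip A x y) ^ 2 ≤ ip A x x * ip A y y := by
  refine Finset.sum_sq_le_sum_mul_sum_of_sq_eq_mul _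
    (fun v _ => div_nonneg (mul_self_nonneg _) (hd v).le)
    (fun v _ => div_nonneg (mul_self_nonneg _) (hd v).le)
    (fun v _ => by field_simp)

lemma ip_self_pos (A : Matrix V V ℝ) (hd : ∀ v, 0 < deg A v) {x : V → ℝ} (hx : x ≠ 0) :
    0 < ip A x x := by
  obtain ⟨v, hv⟩ : ∃ v, x v ≠ 0 := by
    by_contra h; push_neg at h; exact hx (funext h)
  refine Finset.sum_pos' (fun u _ => div_nonneg (mul_self_nonneg _) (hd u).le)
    ⟨v, Finset.mem_univ v, div_pos (mul_self_pos.mpr hv) (hd v)⟩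

lemma ip_add_left (A : Matrix V V ℝ) (x y z : V → ℝ) :
    ip A (x + y) z = ip A x z + ip A y z := by
  unfold ip
  rw [← Finset.sum_add_distrib]
  exact Finset.sum_congr rfl fun v _ => by simp [add_mul, add_div]

lemma ip_add_right (A : Matrix V V ℝ) (x y z : V → ℝ) :
    ip A x (y + z) = ip A x y + ip A x z := by
  unfold ip
  rw [← Finset.sum_add_distrib]
  exact Finset.sum_congr rfl fun v _ => by simp [mul_add, add_div]

lemma ip_smul_right (A : Matrix V V ℝ) (c : ℝ) (x y : V → ℝ) :
    ip A x (c • y) = c * ip A x y := by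
  unfold ip
  rw [Finset.mul_sum]
  exact Finset.sum_congr rfl fun v _ => by simp [Pi.smul_apply, smul_eq_mul]; ring

lemma ip_zero_left (A : Matrix V V ℝ) (y : V → ℝ) : ip A 0 y = 0 := by
  simp [ip]


set_option linter.unusedVariables false

set_option maxHeartbeats 1000000 in
lemma master [Nonempty V] (A : Matrix V V ℝ) (hsym : A.IsSymm) (hd : ∀ v, 0 < deg A v)
    (s : V → ℝ) (hs : ∑ v, s v = 1) (Δ : ℝ) :
    (∑ v, s v * (heat A Δ s v - piV A v) / deg A v
        = ip A (s - piV A) ((NormedSpace.exp (-(Δ • nlap A))).mulVec (s - piV A)))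
    ∧ (∑ v, s v * ((nlap A).mulVec (heat A Δ s)) v / deg A v
        = ip A (s - piV A)
            ((nlap A * NormedSpace.exp (-(Δ • nlap A))).mulVec (s - piV A)))
    ∧ (∑ v, s v * ((nlap A * nlap A).mulVec (heat A Δ s)) v / deg A v
        = ip A (s - piV A)
            ((nlap A * nlap A * NormedSpace.exp (-(Δ • nlap A))).mulVec (s - piV A)))
    ∧ (ip A (s - piV A)
          ((nlap A * NormedSpace.exp (-(Δ • nlap A))).mulVec (s - piV A))) ^ 2
        ≤ ip A (s - piV A) ((NormedSpace.exp (-(Δ • nlap A))).mulVec (s - piV A))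
          * ip A (s - piV A)
              ((nlap A * nlap A * NormedSpace.exp (-(Δ • nlap A))).mulVec (s - piV A))
    ∧ (s - piV A ≠ 0 →
        0 < ip A (s - piV A) ((NormedSpace.exp (-(Δ • nlap A))).mulVec (s - piV A))) := by
  have hvol : 0 < ∑ u, deg A u := Finset.sum_pos (fun v _ => hd v) Finset.univ_nonempty
  set L := nlap A with hLdef
  set z : V → ℝ := s - piV A with hzdef
  set E := NormedSpace.exp (-(Δ • L)) with hE
  set B := NormedSpace.exp ((-(Δ / 2)) • L) with hB
  -- basic facts about π
  have hπsum : ∑ v, piV A v = 1 := by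
    simp only [piV]
    rw [← Finset.sum_div, div_self hvol.ne']
  have hzsum : ∑ v, z v = 0 := by
    simp [hzdef, Finset.sum_sub_distrib, hs, hπsum]
  have hLπ : L.mulVec (piV A) = 0 := by
    have h1 : (Matrix.diagonal fun v => (deg A v)⁻¹).mulVec (piV A)
        = fun _ => (∑ u, deg A u)⁻¹ := by
      funext v
      rw [Matrix.mulVec_diagonal]
      rw [piV, div_eq_mul_inv, ← mul_assoc, inv_mul_cancel₀ (hd v).ne', one_mul]
    have h2 : A.mulVec (fun _ => (∑ u, deg A u)⁻¹) = piV A := by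
      funext v
      simp only [Matrix.mulVec, dotProduct, piV]
      rw [← Finset.sum_mul, div_eq_mul_inv]
      rfl
    rw [hLdef, nlap, Matrix.sub_mulVec, Matrix.one_mulVec, ← Matrix.mulVec_mulVec, h1, h2,
      sub_self]
  -- exp interactions
  have hBB : B * B = E := by
    have harg : ((-(Δ / 2)) • L) + ((-(Δ / 2)) • L) = -(Δ • L) := by
      rw [← add_smul, ← neg_smul]
      congr 1
      ring
    rw [hB, hE, ← harg, Matrix.exp_add_of_commute _ _ (Commute.refl _)]
  have hcLB : Commute L B := commute_exp ((Commute.refl L).smul_right _)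
  have hcLE : Commute L E := by
    rw [hE]
    exact commute_exp (((Commute.refl L).smul_right Δ).neg_right)
  -- symmetry facts
  have hsymL := sym_L A hsym
  have hsymE : ((Matrix.diagonal fun v => (deg A v)⁻¹) * E)ᵀ
      = (Matrix.diagonal fun v => (deg A v)⁻¹) * E := by
    have h := sym_exp A hsym hd (-Δ)
    rw [neg_smul] at h
    exact h
  have hsymB : ((Matrix.diagonal fun v => (deg A v)⁻¹) * B)ᵀ
      = (Matrix.diagonal fun v => (deg A v)⁻¹) * B := sym_exp A hsym hd _
  have hsymLE := sym_mul hsymL hsymE hcLE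
  have hsymLB := sym_mul hsymL hsymB hcLB
  have hsymLL := sym_mul hsymL hsymL (Commute.refl _)
  have hsymLLE := sym_mul hsymLL hsymE (hcLE.mul_left hcLE)
  -- exp fixes π
  have hEπ : E.mulVec (piV A) = piV A := by
    apply exp_mulVec_fixed
    rw [← neg_smul, Matrix.smul_mulVec, hLπ, smul_zero]
  have hBπ : B.mulVec (piV A) = piV A := by
    apply exp_mulVec_fixed
    rw [Matrix.smul_mulVec, hLπ, smul_zero]
  have hs_split : s = z + piV A := by
    funext v; simp [hzdef]
  have hπz : ip A (piV A) z = 0 := by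
    unfold ip
    have hterm : ∀ v, piV A v * z v / deg A v = z v * (∑ u, deg A u)⁻¹ := by
      intro v
      have h1 := (hd v).ne'
      have h2 := hvol.ne'
      rw [piV]
      field_simp
    rw [Finset.sum_congr rfl fun v _ => hterm v, ← Finset.sum_mul, hzsum, zero_mul]
  have hheat : heat A Δ s = E.mulVec s := rfl
  -- reduction of π-components
  have hEz : E.mulVec s - piV A = E.mulVec z := by
    rw [hzdef, Matrix.mulVec_sub, hEπ]
  have hLEπ : (L * E).mulVec (piV A) = 0 := by
    rw [← Matrix.mulVec_mulVec, hEπ, hLπ]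
  have hLLEπ : (L * L * E).mulVec (piV A) = 0 := by
    rw [← Matrix.mulVec_mulVec, hEπ, ← Matrix.mulVec_mulVec, hLπ, Matrix.mulVec_zero]
  -- the three sum identities
  have m1 : ∑ v, s v * (heat A Δ s v - piV A v) / deg A v = ip A z (E.mulVec z) := by
    have : ∑ v, s v * (heat A Δ s v - piV A v) / deg A v = ip A s (E.mulVec z) := by
      rw [← hEz]
      rfl
    rw [this]
    nth_rewrite 1 [hs_split]
    rw [ip_add_left, ip_move hsymE (piV A) z, hEπ, hπz, add_zero]
  have m2 : ∑ v, s v * ((nlap A).mulVec (heat A Δ s)) v / deg A v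
      = ip A z ((L * E).mulVec z) := by
    have hv : (nlap A).mulVec (heat A Δ s) = (L * E).mulVec z := by
      rw [hheat, Matrix.mulVec_mulVec, ← hLdef]
      nth_rewrite 1 [hs_split]
      rw [Matrix.mulVec_add, hLEπ, add_zero]
    have : ∑ v, s v * ((nlap A).mulVec (heat A Δ s)) v / deg A v
        = ip A s ((L * E).mulVec z) := by rw [hv]; rfl
    rw [this]
    nth_rewrite 1 [hs_split]
    rw [ip_add_left, ip_move hsymLE (piV A) z, hLEπ, ip_zero_left, add_zero]
  have m3 : ∑ v, s v * ((nlap A * nlap A).mulVec (heat A Δ s)) v / deg A v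
      = ip A z ((L * L * E).mulVec z) := by
    have hv : (nlap A * nlap A).mulVec (heat A Δ s) = (L * L * E).mulVec z := by
      rw [hheat, Matrix.mulVec_mulVec, ← hLdef, Matrix.mul_assoc, ← Matrix.mul_assoc]
      nth_rewrite 1 [hs_split]
      rw [Matrix.mulVec_add, hLLEπ, add_zero]
    have : ∑ v, s v * ((nlap A * nlap A).mulVec (heat A Δ s)) v / deg A v
        = ip A s ((L * L * E).mulVec z) := by rw [hv]; rfl
    rw [this]
    nth_rewrite 1 [hs_split]
    rw [ip_add_left, ip_move hsymLLE (piV A) z, hLLEπ, ip_zero_left, add_zero]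
  -- express in terms of u = B z, w = L u
  set u : V → ℝ := B.mulVec z with hu
  set w : V → ℝ := L.mulVec u with hw
  have e1 : ip A z (E.mulVec z) = ip A u u := by
    rw [← hBB, ← Matrix.mulVec_mulVec, ip_move hsymB z (B.mulVec z), hu]
  have hLEfact : L * E = B * (L * B) := by
    calc L * E = L * (B * B) := by rw [hBB]
      _ = (L * B) * B := (Matrix.mul_assoc _ _ _).symm
      _ = (B * L) * B := by rw [hcLB.eq]
      _ = B * (L * B) := Matrix.mul_assoc _ _ _
  have e2 : ip A z ((L * E).mulVec z) = ip A u w := by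
    rw [hLEfact, ← Matrix.mulVec_mulVec, ip_move hsymB z ((L * B).mulVec z),
      ← Matrix.mulVec_mulVec, ← hu, ← hw]
  have hLLEfact : L * L * E = (L * B) * (L * B) := by
    calc L * L * E = L * L * (B * B) := by rw [hBB]
      _ = L * (L * (B * B)) := Matrix.mul_assoc _ _ _
      _ = L * ((L * B) * B) := by rw [Matrix.mul_assoc L B B]
      _ = L * ((B * L) * B) := by rw [hcLB.eq]
      _ = L * (B * (L * B)) := by rw [Matrix.mul_assoc B L B]
      _ = (L * B) * (L * B) := (Matrix.mul_assoc _ _ _).symm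
  have e3 : ip A z ((L * L * E).mulVec z) = ip A w w := by
    rw [hLLEfact, ← Matrix.mulVec_mulVec, ip_move hsymLB z ((L * B).mulVec z),
      ← Matrix.mulVec_mulVec, ← hu, ← hw]
  refine ⟨m1, m2, m3, ?_, ?_⟩
  · rw [e1, e2, e3]
    exact ip_cs A hd u w
  · intro hz
    rw [e1]
    apply ip_self_pos A hd
    intro hu0
    apply hz
    have hB' : NormedSpace.exp ((Δ / 2) • L) * B = 1 := by
      rw [hB, ← Matrix.exp_add_of_commute _ _ (((Commute.refl L).smul_left _).smul_right _)]
      have : ((Δ / 2) • L) + ((-(Δ / 2)) • L) = 0 := by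
        rw [← add_smul]
        norm_num
      rw [this, NormedSpace.exp_zero]
    have : z = (NormedSpace.exp ((Δ / 2) • L)).mulVec u := by
      rw [hu, Matrix.mulVec_mulVec, hB', Matrix.one_mulVec]
    rw [this, hu0, Matrix.mulVec_zero]


/-- Lemma 4.8: Cauchy–Schwarz inequality
`f(Δ) · (sᵀ D⁻¹ 𝓛² e^{−Δ𝓛} s) ≥ (sᵀ D⁻¹ 𝓛 e^{−Δ𝓛} s)²`; consequently, if `s ≠ π`
then `f > 0` on `[0,∞)` and `log ∘ f` is convex on `[0,∞)`. -/
theorem log_f_convex {V : Type} [Fintype V] [DecidableEq V]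
    (A : Matrix V V ℝ) (hsym : A.IsSymm) (hnn : ∀ u v, 0 ≤ A u v)
    (hd : ∀ v, 0 < deg A v) (s : V → ℝ) (hs : ∑ v, s v = 1) :
    (∀ Δ : ℝ, 0 ≤ Δ →
      (∑ v, s v * ((nlap A).mulVec (heat A Δ s)) v / deg A v) ^ 2
        ≤ (∑ v, s v * (heat A Δ s v - piV A v) / deg A v)
          * (∑ v, s v * ((nlap A * nlap A).mulVec (heat A Δ s)) v / deg A v)) ∧
    (s ≠ piV A →
      (∀ Δ : ℝ, 0 ≤ Δ → 0 < ∑ v, s v * (heat A Δ s v - piV A v) / deg A v) ∧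
      ConvexOn ℝ (Set.Ici 0)
        (fun Δ => Real.log (∑ v, s v * (heat A Δ s v - piV A v) / deg A v))) := by
  classical
  obtain hVe | hVne := isEmpty_or_nonempty V
  · constructor
    · intro Δ _
      simp [Finset.univ_eq_empty]
    · intro hne
      exact absurd (funext fun v => hVe.elim v) hne
  · have M := master A hsym hd s hs
    refine ⟨?_, ?_⟩
    · intro Δ _
      obtain ⟨m1, m2, m3, mcs, _⟩ := M Δ
      rw [m1, m2, m3]
      exact mcs
    · intro hne
      have hz : s - piV A ≠ 0 := sub_ne_zero.mpr hne
      refine ⟨?_, ?_⟩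
      · intro Δ _
        rw [(M Δ).1]
        exact (M Δ).2.2.2.2 hz
      · set N : Matrix V V ℝ := -(nlap A) with hN
        let lmap : Matrix V V ℝ →ₗ[ℝ] ℝ :=
          { toFun := fun X => ip A (s - piV A) (X.mulVec (s - piV A))
            map_add' := fun X Y => by
              simp only [Matrix.add_mulVec, ip_add_right]
            map_smul' := fun c X => by
              simp only [Matrix.smul_mulVec, ip_smul_right, RingHom.id_apply,
                smul_eq_mul] }
        have lcont : Continuous lmap := lmap.continuous_of_finiteDimensional
        let lclm : Matrix V V ℝ →L[ℝ] ℝ := ⟨lmap, lcont⟩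
        have hexpN : ∀ t : ℝ, NormedSpace.exp (t • N)
            = NormedSpace.exp (-(t • nlap A)) := by
          intro t; rw [hN, smul_neg]
        set F : ℝ → ℝ := fun t => lclm (NormedSpace.exp (t • N)) with hF
        have hFm : ∀ t, F t = ip A (s - piV A)
            ((NormedSpace.exp (-(t • nlap A))).mulVec (s - piV A)) := by
          intro t
          rw [hF]
          simp only [hexpN t]
          rfl
        have hgoal : (fun Δ => Real.log (∑ v, s v * (heat A Δ s v - piV A v) / deg A v))
            = fun Δ => Real.log (F Δ) := by
          funext Δ
          rw [(M Δ).1, ← hFm]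
        rw [hgoal]
        have hFpos : ∀ t, 0 < F t := fun t => by
          rw [hFm]; exact (M t).2.2.2.2 hz
        have hFderiv : ∀ t : ℝ, HasDerivAt F (lclm (NormedSpace.exp (t • N) * N)) t := by
          intro t
          letI : SeminormedRing (Matrix V V ℝ) := Matrix.linftyOpSemiNormedRing
          letI : NormedRing (Matrix V V ℝ) := Matrix.linftyOpNormedRing
          letI : NormedAlgebra ℝ (Matrix V V ℝ) := Matrix.linftyOpNormedAlgebra
          exact lclm.hasFDerivAt.comp_hasDerivAt t (hasDerivAt_exp_smul_const (𝕂 := ℝ) N t)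
        let lmap2 : Matrix V V ℝ →ₗ[ℝ] ℝ :=
          { toFun := fun X => lclm (X * N)
            map_add' := fun X Y => by
              simp only [add_mul, map_add]
            map_smul' := fun c X => by
              simp only [smul_mul_assoc, _root_.map_smul, RingHom.id_apply, smul_eq_mul] }
        let lclm2 : Matrix V V ℝ →L[ℝ] ℝ := ⟨lmap2, lmap2.continuous_of_finiteDimensional⟩
        have hF1deriv : ∀ t : ℝ,
            HasDerivAt (fun u => lclm (NormedSpace.exp (u • N) * N))
              (lclm (NormedSpace.exp (t • N) * N * N)) t := by
          intro t
          letI : SeminormedRing (Matrix V V ℝ) := Matrix.linftyOpSemiNormedRing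
          letI : NormedRing (Matrix V V ℝ) := Matrix.linftyOpNormedRing
          letI : NormedAlgebra ℝ (Matrix V V ℝ) := Matrix.linftyOpNormedAlgebra
          exact lclm2.hasFDerivAt.comp_hasDerivAt t (hasDerivAt_exp_smul_const (𝕂 := ℝ) N t)
        have hcLE : ∀ t : ℝ, Commute (nlap A) (NormedSpace.exp (-(t • nlap A))) :=
          fun t => commute_exp (((Commute.refl _).smul_right t).neg_right)
        have hF1val : ∀ t : ℝ, lclm (NormedSpace.exp (t • N) * N)
            = -(ip A (s - piV A)
                ((nlap A * NormedSpace.exp (-(t • nlap A))).mulVec (s - piV A))) := by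
          intro t
          have h1 : NormedSpace.exp (t • N) * N
              = -(nlap A * NormedSpace.exp (-(t • nlap A))) := by
            rw [hexpN t, hN, mul_neg, ← (hcLE t).eq]
          rw [h1, map_neg]
          rfl
        have hF2val : ∀ t : ℝ, lclm (NormedSpace.exp (t • N) * N * N)
            = ip A (s - piV A)
                ((nlap A * nlap A * NormedSpace.exp (-(t • nlap A))).mulVec (s - piV A)) := by
          intro t
          have h1 : NormedSpace.exp (t • N) * N * N
              = nlap A * nlap A * NormedSpace.exp (-(t • nlap A)) := by
            rw [hexpN t, hN]
            calc NormedSpace.exp (-(t • nlap A)) * -nlap A * -nlap A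
                = (NormedSpace.exp (-(t • nlap A)) * nlap A) * nlap A := by
                  simp [mul_neg, neg_mul, neg_neg]
              _ = (nlap A * NormedSpace.exp (-(t • nlap A))) * nlap A := by
                  rw [← (hcLE t).eq]
              _ = nlap A * (NormedSpace.exp (-(t • nlap A)) * nlap A) := Matrix.mul_assoc _ _ _
              _ = nlap A * (nlap A * NormedSpace.exp (-(t • nlap A))) := by
                  rw [← (hcLE t).eq]
              _ = nlap A * nlap A * NormedSpace.exp (-(t • nlap A)) :=
                  (Matrix.mul_assoc _ _ _).symm
          rw [h1]
          rfl
        refine convexOn_of_hasDerivWithinAt2_nonneg (convex_Ici 0)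
          (f' := fun t => lclm (NormedSpace.exp (t • N) * N) / F t)
          (f'' := fun t => (lclm (NormedSpace.exp (t • N) * N * N) * F t
            - lclm (NormedSpace.exp (t • N) * N) * lclm (NormedSpace.exp (t • N) * N))
              / F t ^ 2)
          ?_ ?_ ?_ ?_
        · have hFc : Continuous F := continuous_iff_continuousAt.mpr
            (fun t => (hFderiv t).differentiableAt.continuousAt)
          exact (hFc.continuousOn).log (fun x _ => (hFpos x).ne')
        · intro x _
          exact ((hFderiv x).log (hFpos x).ne').hasDerivWithinAt
        · intro x _
          exact ((hF1deriv x).div (hFderiv x) (hFpos x).ne').hasDerivWithinAt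
        · intro x _
          apply div_nonneg _ (sq_nonneg _)
          rw [sub_nonneg, hF1val x, hF2val x, hFm x]
          nlinarith [(M x).2.2.2.1]


end GraphHeat
end
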